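/- Suppose the offspring distribution Z satisfies P(Z = 0) = 0, 0 < P(Z = 1) < 1, and E[Z^{1+δ}] < ∞ for some δ > 0. For a vertex v of a tree T define m_T(v) := #{ v' < v : deg(v') ≥ 2 }, the number of strict ancestors of v having at least two children. Then there exists c > 0 such that for GW-almost every tree T there is an N (depending on T) such that for every n ≥ N: min over vertices v at height n of m_T(v) is at least c·n. -/

import Mathlib

open MeasureTheory ProbabilityTheory Filter Real
open scoped ENNReal NNReal

noncomputable section

instance : MeasurableSpace (List ℕ) := ⊤

/-- Ulam–Harris rooted trees; a vertex is encoded as the reversed list of the child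
indices along the path from the root (so the parent of `i :: v` is `v`, and the
root is `[]`).  The children of a vertex are labelled `0, 1, …`, and the set of
children of every vertex is finite. -/
structure GWTree where
  mem : List ℕ → Prop
  root_mem : mem []
  parent_mem : ∀ i v, mem (i :: v) → mem v
  sibling_mem : ∀ i j v, mem (i :: v) → j ≤ i → mem (j :: v)
  fin_children : ∀ v, {i | mem (i :: v)}.Finite

namespace GWTree

/-- The number of children of `v` in `T`. -/
def deg (T : GWTree) (v : List ℕ) : ℕ := (T.fin_children v).toFinset.card

/-- Transition probabilities of the simple random walk on `T`: from a vertex `u` the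
walk moves to a uniformly chosen neighbour of `u` (its parent `u.tail`, if `u` is not
the root, or one of its children `i :: u`). -/
def step (T : GWTree) (u v : List ℕ) : ℝ≥0∞ := by
  classical
  exact if (u ≠ [] ∧ v = u.tail) ∨ (∃ i, v = i :: u ∧ T.mem v) then
    ((T.deg u + (if u = [] then 0 else 1) : ℕ) : ℝ≥0∞)⁻¹
  else 0

end GWTree

instance : MeasurableSpace GWTree :=
  MeasurableSpace.comap (fun T : GWTree => T.mem) inferInstance

/-- The tree generated by an assignment `f` of numbers of children to the potential
vertices: `i :: v` is a vertex iff `v` is a vertex and `i < f v`. -/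
def genMem (f : List ℕ → ℕ) : List ℕ → Prop
  | [] => True
  | i :: v => genMem f v ∧ i < f v

/-- The Galton–Watson tree built from the offspring data `f`. -/
def genTree (f : List ℕ → ℕ) : GWTree where
  mem := genMem f
  root_mem := trivial
  parent_mem := fun _ _ h => h.1
  sibling_mem := fun _ _ _ h hj => ⟨h.1, lt_of_le_of_lt hj h.2⟩
  fin_children := fun v => (Set.finite_Iio (f v)).subset fun _ hi => hi.2

/-- `GW` is the Galton–Watson measure with offspring distribution `ν`: the image of an
i.i.d. family (indexed by the potential vertices) of `ν`-distributed offspring numbers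
under the map generating the corresponding tree. -/
def IsGW (ν : Measure ℕ) (GW : Measure GWTree) : Prop :=
  ∃ (Ω : Type) (_ : MeasurableSpace Ω) (P : Measure Ω),
    IsProbabilityMeasure P ∧
    ∃ ξ : List ℕ → Ω → ℕ,
      iIndepFun ξ P ∧ (∀ v, Measurable (ξ v)) ∧
      (∀ v, P.map (ξ v) = ν) ∧
      GW = P.map fun ω => genTree fun v => ξ v ω

/-- `P` is the law of the simple random walk on `T` started at `v₀`, characterised
through its finite-dimensional distributions. -/
def IsSRWFrom (T : GWTree) (v₀ : List ℕ) (P : Measure (ℕ → List ℕ)) : Prop :=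
  IsProbabilityMeasure P ∧
  ∀ (x : ℕ → List ℕ) (n : ℕ),
    P {ω | ∀ j ≤ n, ω j = x j} =
      (if x 0 = v₀ then 1 else 0) * ∏ j ∈ Finset.range n, T.step (x j) (x (j + 1))

/-- `P` is the law of the simple random walk on `T` started at the root. -/
def IsSRW (T : GWTree) (P : Measure (ℕ → List ℕ)) : Prop := IsSRWFrom T ([] : List ℕ) P

/-- The maximal displacement (distance from the root) of the path `ω` up to time `n`. -/
def maxDisp (n : ℕ) (ω : ℕ → List ℕ) : ℕ :=
  (Finset.range (n + 1)).sup fun j => (ω j).length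

/-- The event that the tree `T` survives (is infinite). -/
def survives (T : GWTree) : Prop := {v | T.mem v}.Infinite

/-- `m_T(v)`: the number of strict ancestors of `v` having at least two children. -/
def mTcount (T : GWTree) (v : List ℕ) : ℕ :=
  Set.ncard {j : ℕ | j < v.length ∧ 2 ≤ T.deg (v.drop (j + 1))}


/-! ### Auxiliary lemmas -/

section AuxTree

lemma genMem_drop (f : List ℕ → ℕ) : ∀ (v : List ℕ) (m : ℕ), genMem f v → genMem f (v.drop m)
  | [], m, _ => by simp [genMem]
  | i :: v, 0, h => h
  | i :: v, m + 1, h => by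
      simpa using genMem_drop f v m h.1

lemma genMem_iff (f : List ℕ → ℕ) :
    ∀ v : List ℕ, genMem f v ↔ ∀ j < v.length, v.getD j 0 < f (v.drop (j + 1)) := by
  intro v
  induction v with
  | nil => simp [genMem]
  | cons i v ih =>
    constructor
    · rintro ⟨h1, h2⟩ j hj
      cases j with
      | zero => simpa using h2
      | succ j => simpa using (ih.1 h1) j (by simpa using hj)
    · intro h
      refine ⟨ih.2 fun j hj => ?_, by simpa using h 0 (by simp)⟩
      simpa using h (j + 1) (by simpa using hj)

lemma deg_genTree (f : List ℕ → ℕ) (v : List ℕ) (h : genMem f v) :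
    (genTree f).deg v = f v := by
  have : ((genTree f).fin_children v).toFinset = Finset.range (f v) := by
    ext i
    simp only [Set.Finite.mem_toFinset, Finset.mem_range]
    show genMem f (i :: v) ↔ i < f v
    exact ⟨fun hh => hh.2, fun hh => ⟨h, hh⟩⟩
  simp [GWTree.deg, this]

lemma two_le_deg_iff (T : GWTree) (w : List ℕ) : 2 ≤ T.deg w ↔ T.mem (1 :: w) := by
  constructor
  · intro h
    have h1 : 1 < (T.fin_children w).toFinset.card := h
    obtain ⟨a, ha, b, hb, hab⟩ := Finset.one_lt_card.1 h1
    have ha' : T.mem (a :: w) := by simpa using ha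
    have hb' : T.mem (b :: w) := by simpa using hb
    rcases le_or_gt 1 a with h' | h'
    · exact T.sibling_mem a 1 w ha' h'
    · have : 1 ≤ b := by omega
      exact T.sibling_mem b 1 w hb' this
  · intro h
    have h0 : T.mem (0 :: w) := T.sibling_mem 1 0 w h (by norm_num)
    have : ({0, 1} : Finset ℕ) ⊆ (T.fin_children w).toFinset := by
      intro i hi
      simp only [Finset.mem_insert, Finset.mem_singleton] at hi
      rcases hi with rfl | rfl <;> simpa [Set.Finite.mem_toFinset]
    calc 2 = ({0, 1} : Finset ℕ).card := by decide
    _ ≤ _ := Finset.card_le_card this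

open scoped Classical in
lemma mTcount_eq_card (T : GWTree) (v : List ℕ) :
    mTcount T v
      = ((Finset.range v.length).filter (fun j => T.mem (1 :: v.drop (j + 1)))).card := by
  classical
  rw [mTcount, ← Set.ncard_coe_finset]
  congr 1
  ext j
  simp [two_le_deg_iff]

lemma measurable_GWmem (w : List ℕ) : MeasurableSet {T : GWTree | T.mem w} := by
  refine ⟨(fun g : List ℕ → Prop => g w) ⁻¹' {p | p}, ?_, rfl⟩
  exact measurable_pi_apply w trivial

open scoped Classical in
lemma measurable_mTcount (v : List ℕ) : Measurable fun T : GWTree => mTcount T v := by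
  classical
  have : (fun T : GWTree => mTcount T v)
      = fun T => ∑ j ∈ Finset.range v.length,
          if T.mem (1 :: v.drop (j + 1)) then 1 else 0 := by
    funext T
    rw [mTcount_eq_card, Finset.card_filter]
  rw [this]
  refine Finset.measurable_sum _ fun j _ => ?_
  exact Measurable.ite (measurable_GWmem _) measurable_const measurable_const

end AuxTree

section PF

open scoped Classical

/-- one-step weight -/
def stepW (x : ℝ≥0∞) (k i : ℕ) : ℝ≥0∞ :=
  if i < k then (if 2 ≤ k then x else 1) else 0

def pF (x : ℝ≥0∞) (f : List ℕ → ℕ) (v : List ℕ) : ℝ≥0∞ :=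
  ∏ j ∈ Finset.range v.length, stepW x (f (v.drop (j + 1))) (v.getD j 0)

lemma pF_nil (x : ℝ≥0∞) (f : List ℕ → ℕ) : pF x f ([] : List ℕ) = 1 := by simp [pF]

lemma pF_cons (x : ℝ≥0∞) (f : List ℕ → ℕ) (i : ℕ) (v : List ℕ) :
    pF x f (i :: v) = pF x f v * stepW x (f v) i := by
  rw [pF, List.length_cons, Finset.prod_range_succ']
  simp [pF]

lemma tsum_stepW (x : ℝ≥0∞) (k : ℕ) :
    ∑' i : ℕ, stepW x k i = (k : ℝ≥0∞) * (if 2 ≤ k then x else 1) := by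
  rw [tsum_eq_sum (s := Finset.range k) (by intro i hi; simp [stepW, Finset.mem_range.not.1 hi])]
  have : ∀ i ∈ Finset.range k, stepW x k i = (if 2 ≤ k then x else 1) := by
    intro i hi; simp [stepW, Finset.mem_range.1 hi]
  rw [Finset.sum_congr rfl this, Finset.sum_const, Finset.card_range, nsmul_eq_mul]

lemma pF_eq_pow_mTcount (x : ℝ≥0∞) (f : List ℕ → ℕ) (v : List ℕ) (h : genMem f v) :
    pF x f v = x ^ mTcount (genTree f) v := by
  classical
  have hchar := (genMem_iff f v).1 h
  have h1 : ∀ j ∈ Finset.range v.length,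
      stepW x (f (v.drop (j + 1))) (v.getD j 0) = if 2 ≤ f (v.drop (j + 1)) then x else 1 := by
    intro j hj; rw [Finset.mem_range] at hj
    unfold stepW
    rw [if_pos (hchar j hj)]
  rw [pF, Finset.prod_congr rfl h1, Finset.prod_ite, Finset.prod_const, Finset.prod_const_one,
    mul_one]
  congr 1
  rw [mTcount_eq_card]
  congr 1
  refine (Finset.filter_congr fun j hj => ?_).symm
  rw [Finset.mem_range] at hj
  show (genTree f).mem (1 :: v.drop (j + 1)) ↔ 2 ≤ f (v.drop (j + 1))
  have hmem : genMem f (v.drop (j + 1)) := genMem_drop f v (j + 1) h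
  exact ⟨fun hh => hh.2, fun hh => ⟨hmem, hh⟩⟩

end PF

def consEquiv (n : ℕ) : ℕ × {l : List ℕ // l.length = n} ≃ {l : List ℕ // l.length = n + 1} where
  toFun p := ⟨p.1 :: p.2.1, by simp [p.2.2]⟩
  invFun l := (l.1.headI, ⟨l.1.tail, by rw [List.length_tail, l.2]; rfl⟩)
  left_inv p := by
    rcases p with ⟨i, v, hv⟩
    simp
  right_inv l := by
    rcases l with ⟨l, hl⟩
    cases l with
    | nil => simp at hl
    | cons i v => simp

section MainAux
variable {Ω : Type} [MeasurableSpace Ω] {P : Measure Ω} [IsProbabilityMeasure P]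
  {ξ : List ℕ → Ω → ℕ}

lemma pF_measurable (hξ : ∀ v, Measurable (ξ v)) (x : ℝ≥0∞) (v : List ℕ) :
    Measurable fun ω => pF x (fun w => ξ w ω) v := by
  refine Finset.measurable_prod _ fun j _ => ?_
  exact (measurable_from_top (f := fun k : ℕ => stepW x k (v.getD j 0))).comp (hξ _)

lemma A_eq (hInd : iIndepFun ξ P) (hξ : ∀ v, Measurable (ξ v))
    (x : ℝ≥0∞) (φ : ℝ≥0∞)
    (hφ : ∀ w, ∫⁻ ω, (ξ w ω : ℝ≥0∞) * (if 2 ≤ ξ w ω then x else 1) ∂P = φ) :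
    ∀ n : ℕ,
      ∑' v : {l : List ℕ // l.length = n}, ∫⁻ ω, pF x (fun w => ξ w ω) v.1 ∂P = φ ^ n := by
  classical
  intro n
  induction n with
  | zero =>
    rw [tsum_eq_single (⟨[], rfl⟩ : {l : List ℕ // l.length = 0})]
    · simp [pF_nil]
    · rintro ⟨l, hl⟩ hne
      exact absurd (Subtype.ext (List.length_eq_zero_iff.1 hl)) hne
  | succ n ih =>
    have key : ∀ v : {l : List ℕ // l.length = n},
        ∑' i : ℕ, ∫⁻ ω, pF x (fun w => ξ w ω) (i :: v.1) ∂P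
          = (∫⁻ ω, pF x (fun w => ξ w ω) v.1 ∂P) * φ := by
      intro v
      set g : List ℕ → ℕ → ℝ≥0∞ := fun w k =>
        if w = v.1 then (k : ℝ≥0∞) * (if 2 ≤ k then x else 1)
        else stepW x k (v.1.getD (v.1.length - 1 - w.length) 0) with hg
      set η : List ℕ → Ω → ℝ≥0∞ := fun w => g w ∘ ξ w with hη
      set S : Finset (List ℕ) := (Finset.range v.1.length).image (fun j => v.1.drop (j + 1))
        with hS
      have hηind : iIndepFun η P :=
        hInd.comp g fun w => measurable_from_top
      have hηmeas : ∀ w, Measurable (η w) := fun w => measurable_from_top.comp (hξ w)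
      have hvS : v.1 ∉ S := by
        intro h
        obtain ⟨j, hj, hdrop⟩ := Finset.mem_image.1 h
        rw [Finset.mem_range] at hj
        have := congrArg List.length hdrop
        rw [List.length_drop] at this
        omega
      have hprod : (∏ w ∈ S, η w) = fun ω => pF x (fun w => ξ w ω) v.1 := by
        funext ω
        rw [Finset.prod_apply, hS, Finset.prod_image, pF]
        · refine Finset.prod_congr rfl fun j hj => ?_
          rw [Finset.mem_range] at hj
          have hne : v.1.drop (j + 1) ≠ v.1 := by
            intro h
            have := congrArg List.length h
            rw [List.length_drop] at this
            omega
          have hlen : v.1.length - 1 - (v.1.drop (j + 1)).length = j := by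
            rw [List.length_drop]; omega
          simp only [hη, hg, Function.comp_apply, if_neg hne, hlen]
        · intro j hj k hk h
          rw [Finset.mem_coe, Finset.mem_range] at hj hk
          have := congrArg List.length h
          rw [List.length_drop, List.length_drop] at this
          omega
      have hIndep : IndepFun (fun ω => pF x (fun w => ξ w ω) v.1) (η v.1) P := by
        have := hηind.indepFun_finsetProd_of_notMem hηmeas hvS
        rwa [hprod] at this
      rw [← lintegral_tsum fun i => (pF_measurable hξ x (i :: v.1)).aemeasurable]
      have hpt : ∀ ω, ∑' i : ℕ, pF x (fun w => ξ w ω) (i :: v.1)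
          = pF x (fun w => ξ w ω) v.1 * η v.1 ω := by
        intro ω
        simp_rw [pF_cons]
        rw [ENNReal.tsum_mul_left, tsum_stepW]
        simp [hη, hg]
      rw [lintegral_congr hpt]
      have := lintegral_mul_eq_lintegral_mul_lintegral_of_indepFun
        (pF_measurable hξ x v.1) (hηmeas v.1) hIndep
      simp only [Pi.mul_apply] at this
      rw [this]
      congr 1
      rw [← hφ v.1]
      refine lintegral_congr fun ω => ?_
      simp [hη, hg]
    calc ∑' v : {l : List ℕ // l.length = n + 1}, ∫⁻ ω, pF x (fun w => ξ w ω) v.1 ∂P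
        = ∑' p : ℕ × {l : List ℕ // l.length = n},
            ∫⁻ ω, pF x (fun w => ξ w ω) (p.1 :: p.2.1) ∂P := by
          rw [← (consEquiv n).tsum_eq]; rfl
      _ = ∑' i : ℕ, ∑' v : {l : List ℕ // l.length = n},
            ∫⁻ ω, pF x (fun w => ξ w ω) (i :: v.1) ∂P := by
          rw [ENNReal.tsum_prod
            (f := fun (i : ℕ) (v : {l : List ℕ // l.length = n}) =>
              ∫⁻ ω, pF x (fun w => ξ w ω) (i :: v.1) ∂P)]
      _ = ∑' v : {l : List ℕ // l.length = n}, ∑' i : ℕ,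
            ∫⁻ ω, pF x (fun w => ξ w ω) (i :: v.1) ∂P := ENNReal.tsum_comm
      _ = ∑' v : {l : List ℕ // l.length = n},
            (∫⁻ ω, pF x (fun w => ξ w ω) v.1 ∂P) * φ := tsum_congr key
      _ = (∑' v : {l : List ℕ // l.length = n},
            ∫⁻ ω, pF x (fun w => ξ w ω) v.1 ∂P) * φ := ENNReal.tsum_mul_right
      _ = φ ^ (n + 1) := by rw [ih, pow_succ]

end MainAux

/-- there is `c > 0` such that for `GW`-a.e. tree `T` there is `N` with
`min{m_T(v) : |v| = n} ≥ c·n` for all `n ≥ N`. -/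
theorem branching_ancestors_linear_lower_bound
    (ν : Measure ℕ) [IsProbabilityMeasure ν]
    (hz0 : ν {0} = 0) (hz1 : 0 < ν {1}) (hz1' : ν {1} < 1)
    (hmom : ∃ δ : ℝ, 0 < δ ∧ ∫⁻ k, (k : ℝ≥0∞) ^ ((1 : ℝ) + δ) ∂ν < ⊤)
    (GW : Measure GWTree) (hGW : IsGW ν GW) :
    ∃ c : ℝ, 0 < c ∧
      ∀ᵐ T ∂GW, ∃ N : ℕ, ∀ n, N ≤ n → ∀ v : List ℕ, T.mem v → v.length = n →
        c * n ≤ (mTcount T v : ℝ) := by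
  classical
  obtain ⟨Ω, mΩ, P, hP, ξ, hInd, hξ, hmap, hGWeq⟩ := hGW
  haveI := hP
  obtain ⟨δ, hδ, hintδ⟩ := hmom
  -- the first moment is finite
  set μ₁ : ℝ≥0∞ := ∫⁻ k, (k : ℝ≥0∞) ∂ν with hμ₁def
  have hμ₁ : μ₁ < ⊤ := by
    refine lt_of_le_of_lt (lintegral_mono fun k => ?_) hintδ
    rcases Nat.eq_zero_or_pos k with rfl | hk
    · simp [ENNReal.zero_rpow_of_pos (by linarith : (0:ℝ) < 1 + δ)]
    · calc (k : ℝ≥0∞) = (k : ℝ≥0∞) ^ (1 : ℝ) := (ENNReal.rpow_one _).symm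
        _ ≤ (k : ℝ≥0∞) ^ ((1 : ℝ) + δ) :=
          ENNReal.rpow_le_rpow_of_exponent_le (by exact_mod_cast hk) (by linarith)
  set p : ℝ≥0∞ := ν {1} with hpdef
  have hp1 : p < 1 := hz1'
  have hptop : p ≠ ⊤ := (hp1.trans ENNReal.one_lt_top).ne
  set ε : ℝ≥0∞ := 1 - p with hεdef
  have hε0 : ε ≠ 0 := (tsub_pos_of_lt hp1).ne'
  have hεtop : ε ≠ ⊤ := ne_top_of_le_ne_top ENNReal.one_ne_top tsub_le_self
  set x : ℝ≥0∞ := min (1/2) ((ε/2) / (μ₁ + 1)) with hxdef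
  have hx0 : x ≠ 0 := by
    refine (lt_min (by norm_num) ?_).ne'
    exact ENNReal.div_pos (by simp [hε0]) (by simp [hμ₁.ne])
  have hxhalf : x ≤ 1/2 := min_le_left _ _
  have hx1 : x < 1 := lt_of_le_of_lt hxhalf (by norm_num)
  have hxtop : x ≠ ⊤ := (hx1.trans ENNReal.one_lt_top).ne
  set g : ℕ → ℝ≥0∞ := fun k => (k : ℝ≥0∞) * (if 2 ≤ k then x else 1) with hgdef
  set φ : ℝ≥0∞ := ∫⁻ k, g k ∂ν with hφdef
  have hφ : ∀ w, ∫⁻ ω, (ξ w ω : ℝ≥0∞) * (if 2 ≤ ξ w ω then x else 1) ∂P = φ := by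
    intro w
    rw [hφdef, ← hmap w, lintegral_map measurable_from_top (hξ w)]
  have hφ_ge : p ≤ φ := by
    rw [hpdef, ← lintegral_indicator_one (show MeasurableSet ({1} : Set ℕ) from trivial)]
    refine lintegral_mono fun k => ?_
    rcases eq_or_ne k 1 with rfl | hne
    · simp [hgdef]
    · simp [Set.indicator_of_notMem, hne]
  have hφ0 : φ ≠ 0 := by
    intro h
    rw [h] at hφ_ge
    exact absurd (le_antisymm hφ_ge bot_le) hz1.ne'
  have hφ1 : φ < 1 := by
    have hle : φ ≤ p + x * μ₁ := by
      have hpt : ∀ k : ℕ, g k ≤ ({1} : Set ℕ).indicator (1 : ℕ → ℝ≥0∞) k + x * k := by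
        intro k
        match k with
        | 0 => simp [hgdef]
        | 1 => simp [hgdef]
        | (k+2) =>
          have : ¬ ((k+2 : ℕ) ∈ ({1} : Set ℕ)) := by simp
          simp only [hgdef, Set.indicator_of_notMem this, zero_add]
          rw [if_pos (by omega), mul_comm]
      calc φ ≤ ∫⁻ k, (({1} : Set ℕ).indicator (1 : ℕ → ℝ≥0∞) k + x * k) ∂ν :=
            lintegral_mono hpt
        _ = p + x * μ₁ := by
            rw [lintegral_add_left (by
              exact (measurable_from_top :
                Measurable (({1} : Set ℕ).indicator (1 : ℕ → ℝ≥0∞)))),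
              lintegral_indicator_one (show MeasurableSet ({1} : Set ℕ) from trivial),
              lintegral_const_mul x measurable_from_top]
    have hxμ : x * μ₁ ≤ ε / 2 := by
      calc x * μ₁ ≤ ((ε/2) / (μ₁ + 1)) * (μ₁ + 1) :=
            mul_le_mul' (min_le_right _ _) le_self_add
        _ = ε / 2 := ENNReal.div_mul_cancel (by simp) (by simp [hμ₁.ne])
    calc φ ≤ p + x * μ₁ := hle
      _ ≤ p + ε / 2 := add_le_add_right hxμ p
      _ < p + ε := ENNReal.add_lt_add_left hptop (ENNReal.half_lt_self hε0 hεtop)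
      _ = 1 := add_tsub_cancel_of_le hp1.le
  have hφtop : φ ≠ ⊤ := (hφ1.trans ENNReal.one_lt_top).ne
  -- real constants
  set a : ℝ := x.toReal with hadef
  set b : ℝ := φ.toReal with hbdef
  have ha0 : 0 < a := ENNReal.toReal_pos hx0 hxtop
  have hb0 : 0 < b := ENNReal.toReal_pos hφ0 hφtop
  have ha1 : a < 1 := by
    have := (ENNReal.toReal_lt_toReal hxtop ENNReal.one_ne_top).2 hx1
    simpa using this
  have hb1 : b < 1 := by
    have := (ENNReal.toReal_lt_toReal hφtop ENNReal.one_ne_top).2 hφ1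
    simpa using this
  have hla : Real.log a < 0 := Real.log_neg ha0 ha1
  have hlb : Real.log b < 0 := Real.log_neg hb0 hb1
  set c : ℝ := Real.log b / (2 * Real.log a) with hcdef
  have hc : 0 < c := div_pos_of_neg_of_neg hlb (by linarith)
  set r : ℝ≥0∞ := ENNReal.ofReal (a ^ (-c) * b) with hrdef
  have hr1 : r < 1 := by
    rw [hrdef, ENNReal.ofReal_lt_one]
    have hla0 : Real.log a ≠ 0 := ne_of_lt hla
    have hab : a ^ (-c) * b = Real.exp (Real.log b / 2) := by
      have h2 : Real.exp (Real.log a * -c) * b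
          = Real.exp (Real.log a * -c + Real.log b) := by
        rw [Real.exp_add, Real.exp_log hb0]
      rw [Real.rpow_def_of_pos ha0, h2]
      congr 1
      rw [hcdef]
      field_simp
      ring
    rw [hab]
    exact Real.exp_lt_one_iff.2 (by linarith)
  have hx_eq : x = ENNReal.ofReal a := (ENNReal.ofReal_toReal hxtop).symm
  have hφ_eq : φ = ENNReal.ofReal b := (ENNReal.ofReal_toReal hφtop).symm
  have hxr : ∀ n : ℕ, x ^ (-(c * n) : ℝ) * φ ^ n = r ^ n := by
    intro n
    rw [hx_eq, hφ_eq, ENNReal.ofReal_rpow_of_pos ha0,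
      ← ENNReal.ofReal_pow hb0.le, ← ENNReal.ofReal_mul (by positivity),
      hrdef, ← ENNReal.ofReal_pow (by positivity)]
    congr 1
    rw [mul_pow]
    congr 1
    rw [← Real.rpow_natCast (a ^ (-c)) n, ← Real.rpow_mul ha0.le]
    congr 1
    ring
  -- the generating map is measurable
  set G : Ω → GWTree := fun ω => genTree fun w => ξ w ω with hGdef
  have hgenmeas : ∀ w : List ℕ, MeasurableSet {ω | genMem (fun u => ξ u ω) w} := by
    intro w
    induction w with
    | nil => simpa [genMem] using MeasurableSet.univ
    | cons i w ihw =>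
      have : {ω | genMem (fun u => ξ u ω) (i :: w)}
          = {ω | genMem (fun u => ξ u ω) w} ∩ (ξ w ⁻¹' {k | i < k}) := rfl
      rw [this]
      exact ihw.inter ((hξ w) trivial)
  have hG : Measurable G := by
    rintro s ⟨t, ht, rfl⟩
    have : G ⁻¹' ((fun T : GWTree => T.mem) ⁻¹' t)
        = (fun ω => fun u : List ℕ => genMem (fun u' => ξ u' ω) u) ⁻¹' t := rfl
    rw [this]
    exact measurable_pi_lambda _ (fun u => measurableSet_setOf.1 (hgenmeas u)) ht
  -- bad events
  set bad : ℕ → Set GWTree := fun n =>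
    {T | ∃ v : List ℕ, T.mem v ∧ v.length = n ∧ (mTcount T v : ℝ) < c * n} with hbaddef
  have hbadmeas : ∀ n, MeasurableSet (bad n) := by
    intro n
    have : bad n = ⋃ v : List ℕ,
        ({T : GWTree | T.mem v} ∩ {T | (mTcount T v : ℝ) < c * n} ∩ {T | v.length = n}) := by
      ext T
      simp only [hbaddef, Set.mem_setOf_eq, Set.mem_iUnion, Set.mem_inter_iff]
      tauto
    rw [this]
    refine MeasurableSet.iUnion fun v => ((measurable_GWmem v).inter ?_).inter
      (MeasurableSet.const _)
    exact measurableSet_lt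
      ((measurable_from_top (f := fun m : ℕ => (m : ℝ))).comp (measurable_mTcount v))
      measurable_const
  -- quantitative bound
  have hbound : ∀ n : ℕ, GW (bad n) ≤ r ^ n := by
    intro n
    have hGWapp : GW (bad n) = P (G ⁻¹' bad n) := by
      rw [hGWeq, Measure.map_apply hG (hbadmeas n)]
    set xneg : ℝ≥0∞ := x ^ (-(c * n) : ℝ) with hxnegdef
    have hxnegtop : xneg ≠ ⊤ := by
      rw [hxnegdef, hx_eq, ENNReal.ofReal_rpow_of_pos ha0]
      exact ENNReal.ofReal_ne_top
    have hsubset : G ⁻¹' bad n ⊆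
        ⋃ v : {l : List ℕ // l.length = n},
          {ω | 1 ≤ xneg * pF x (fun w => ξ w ω) v.1} := by
      rintro ω ⟨v, hmem, hlen, hlt⟩
      refine Set.mem_iUnion.2 ⟨⟨v, hlen⟩, ?_⟩
      have hgen : genMem (fun w => ξ w ω) v := hmem
      have hpf : pF x (fun w => ξ w ω) v = x ^ (mTcount (G ω) v) :=
        pF_eq_pow_mTcount x _ v hgen
      have h1 : x ^ ((c * n : ℝ)) ≤ x ^ ((mTcount (G ω) v : ℝ)) :=
        ENNReal.rpow_le_rpow_of_exponent_ge hx1.le hlt.le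
      have h2 : (1 : ℝ≥0∞) ≤ xneg * x ^ ((c * n : ℝ)) := by
        rw [hxnegdef, ← ENNReal.rpow_add _ _ hx0 hxtop]
        simp
      show (1 : ℝ≥0∞) ≤ xneg * pF x (fun w => ξ w ω) v
      calc (1 : ℝ≥0∞) ≤ xneg * x ^ ((c * n : ℝ)) := h2
        _ ≤ xneg * pF x (fun w => ξ w ω) v := by
            refine mul_le_mul_right (h1.trans_eq ?_) xneg
            rw [ENNReal.rpow_natCast, hpf]
    have hMarkov : ∀ v : {l : List ℕ // l.length = n},
        P {ω | 1 ≤ xneg * pF x (fun w => ξ w ω) v.1}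
          ≤ xneg * ∫⁻ ω, pF x (fun w => ξ w ω) v.1 ∂P := by
      intro v
      have hmeas : Measurable fun ω => xneg * pF x (fun w => ξ w ω) v.1 :=
        measurable_const.mul (pF_measurable hξ x v.1)
      have := mul_meas_ge_le_lintegral₀ (μ := P) hmeas.aemeasurable 1
      rw [one_mul] at this
      refine this.trans_eq ?_
      exact lintegral_const_mul' xneg _ hxnegtop
    calc GW (bad n) = P (G ⁻¹' bad n) := hGWapp
      _ ≤ P (⋃ v : {l : List ℕ // l.length = n},
            {ω | 1 ≤ xneg * pF x (fun w => ξ w ω) v.1}) := measure_mono hsubset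
      _ ≤ ∑' v : {l : List ℕ // l.length = n},
            P {ω | 1 ≤ xneg * pF x (fun w => ξ w ω) v.1} := measure_iUnion_le _
      _ ≤ ∑' v : {l : List ℕ // l.length = n},
            xneg * ∫⁻ ω, pF x (fun w => ξ w ω) v.1 ∂P := ENNReal.tsum_le_tsum hMarkov
      _ = xneg * ∑' v : {l : List ℕ // l.length = n},
            ∫⁻ ω, pF x (fun w => ξ w ω) v.1 ∂P := ENNReal.tsum_mul_left
      _ = xneg * φ ^ n := by rw [A_eq hInd hξ x φ hφ n]
      _ = r ^ n := hxr n
  -- Borel–Cantelli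
  have hsum : ∑' n, GW (bad n) ≠ ⊤ := by
    refine ne_top_of_le_ne_top ?_ (ENNReal.tsum_le_tsum hbound)
    rw [ENNReal.tsum_geometric]
    exact ENNReal.inv_ne_top.2 (tsub_pos_of_lt hr1).ne'
  refine ⟨c, hc, ?_⟩
  filter_upwards [ae_eventually_notMem hsum] with T hT
  obtain ⟨N, hN⟩ := eventually_atTop.1 hT
  refine ⟨N, fun n hn v hv hvlen => ?_⟩
  by_contra hcon
  push_neg at hcon
  exact hN n hn ⟨v, hv, hvlen, hcon⟩


end
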